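/- Assume 0 < γ < 1, 0 ≤ ε < 1/2, and γ·(1−2ε)·(2(g−1)−2gε) > 2−g. Set R_C = (1−ε)·2g + ε·g and R_D = (1−ε)·2 + ε·(2+g). Define the Q-table Q by: Q((C,C),C) = Q((D,D),C) = ((1−γε)·R_C + γε·R_D)/(1−γ); Q((C,D),D) = Q((D,C),D) = (γ(1−ε)·R_C + (1−γ(1−ε))·R_D)/(1−γ); Q((C,C),D) = Q((D,D),D) = γ(1−ε)·Q((D,C),D) + γε·Q((D,D),C) + (1−ε)(2+g) + 2ε; Q((C,D),C) = Q((D,C),C) = γ(1−ε)·Q((C,D),D) + γε·Q((C,C),C) + (1−ε)g + 2gε. Then Q is an ε-greedy fixed point of the self-play multi-agent Bellman equation, and its greedy policy is Pavlov: Q(s,C) > Q(s,D) for s ∈ {(C,C),(D,D)} and Q(s,C) < Q(s,D) for s ∈ {(C,D),(D,C)}. -/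
import Mathlib


inductive Act | C | D
deriving DecidableEq

open Act

abbrev State := Act × Act

/-- The greedy action of a Q-table in a state (ties broken toward D). -/
noncomputable def greedy (Q : State → Act → ℝ) (s : State) : Act :=
  if Q s C > Q s D then C else D

/-- The other (non-greedy) action. -/
def other : Act → Act
  | C => D
  | D => C

/-- the explicitly given Q-table is an ε-greedy fixed point of the
self-play multi-agent Bellman equation whose greedy policy is Pavlov. -/
theorem pavlov_fixed_point
    (g γ ε : ℝ) (hg1 : 1 < g) (hg2 : g < 2)
    (hγ0 : 0 < γ) (hγ1 : γ < 1) (hε0 : 0 ≤ ε) (hε1 : ε < 1 / 2)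
    (hcond : γ * (1 - 2 * ε) * (2 * (g - 1) - 2 * g * ε) > 2 - g)
    (r : Act → Act → ℝ)
    (hrCC : r C C = 2 * g) (hrCD : r C D = g)
    (hrDC : r D C = 2 + g) (hrDD : r D D = 2)
    (RC RD : ℝ)
    (hRC : RC = (1 - ε) * (2 * g) + ε * g)
    (hRD : RD = (1 - ε) * 2 + ε * (2 + g))
    (Q : State → Act → ℝ)
    (h1 : Q (C, C) C = ((1 - γ * ε) * RC + γ * ε * RD) / (1 - γ))
    (h1' : Q (D, D) C = ((1 - γ * ε) * RC + γ * ε * RD) / (1 - γ))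
    (h2 : Q (C, D) D = (γ * (1 - ε) * RC + (1 - γ * (1 - ε)) * RD) / (1 - γ))
    (h2' : Q (D, C) D = (γ * (1 - ε) * RC + (1 - γ * (1 - ε)) * RD) / (1 - γ))
    (h3 : Q (C, C) D = γ * (1 - ε) * Q (D, C) D + γ * ε * Q (D, D) C
            + (1 - ε) * (2 + g) + 2 * ε)
    (h3' : Q (D, D) D = γ * (1 - ε) * Q (D, C) D + γ * ε * Q (D, D) C
            + (1 - ε) * (2 + g) + 2 * ε)
    (h4 : Q (C, D) C = γ * (1 - ε) * Q (C, D) D + γ * ε * Q (C, C) C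
            + (1 - ε) * g + 2 * g * ε)
    (h4' : Q (D, C) C = γ * (1 - ε) * Q (C, D) D + γ * ε * Q (C, C) C
            + (1 - ε) * g + 2 * g * ε) :
    (∀ (s : State) (a1 : Act),
        Q s a1 =
          (1 - ε) * (r a1 (greedy Q (s.2, s.1))
            + γ * max (Q (a1, greedy Q (s.2, s.1)) C) (Q (a1, greedy Q (s.2, s.1)) D))
          + ε * (r a1 (other (greedy Q (s.2, s.1)))
            + γ * max (Q (a1, other (greedy Q (s.2, s.1))) C)
                (Q (a1, other (greedy Q (s.2, s.1))) D)))
    ∧ Q (C, C) C > Q (C, C) D ∧ Q (D, D) C > Q (D, D) D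
    ∧ Q (C, D) C < Q (C, D) D ∧ Q (D, C) C < Q (D, C) D := by
  have hγne : (1 : ℝ) - γ ≠ 0 := by linarith
  have hγpos : (0 : ℝ) < 1 - γ := by linarith
  -- key differences
  have key1 : Q (C, C) C - Q (C, C) D
      = γ * (1 - 2 * ε) * (2 * (g - 1) - 2 * g * ε) + g - 2 := by
    rw [h3, h2', h1', h1, hRC, hRD]
    field_simp
    ring
  have key1' : Q (D, D) C - Q (D, D) D
      = γ * (1 - 2 * ε) * (2 * (g - 1) - 2 * g * ε) + g - 2 := by
    rw [h3', h2', h1', hRC, hRD]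
    field_simp
    ring
  have key2 : Q (C, D) D - Q (C, D) C
      = γ * (1 - 2 * ε) * (2 * (g - 1) - 2 * g * ε) + 2 - g := by
    rw [h4, h2, h1, hRC, hRD]
    field_simp
    ring
  have key2' : Q (D, C) D - Q (D, C) C
      = γ * (1 - 2 * ε) * (2 * (g - 1) - 2 * g * ε) + 2 - g := by
    rw [h4', h2, h2', h1, hRC, hRD]
    field_simp
    ring
  have nCC : Q (C, C) C > Q (C, C) D := by linarith
  have nDD : Q (D, D) C > Q (D, D) D := by linarith
  have nCD : Q (C, D) C < Q (C, D) D := by linarith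
  have nDC : Q (D, C) C < Q (D, C) D := by linarith
  have gCC : greedy Q (C, C) = C := by unfold greedy; rw [if_pos nCC]
  have gDD : greedy Q (D, D) = C := by unfold greedy; rw [if_pos nDD]
  have gCD : greedy Q (C, D) = D := by unfold greedy; rw [if_neg (not_lt.mpr nCD.le)]
  have gDC : greedy Q (D, C) = D := by unfold greedy; rw [if_neg (not_lt.mpr nDC.le)]
  have mCC : max (Q (C, C) C) (Q (C, C) D) = Q (C, C) C := max_eq_left nCC.le
  have mDD : max (Q (D, D) C) (Q (D, D) D) = Q (D, D) C := max_eq_left nDD.le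
  have mCD : max (Q (C, D) C) (Q (C, D) D) = Q (C, D) D := max_eq_right nCD.le
  have mDC : max (Q (D, C) C) (Q (D, C) D) = Q (D, C) D := max_eq_right nDC.le
  refine ⟨?_, nCC, nDD, nCD, nDC⟩
  rintro ⟨a, b⟩ a1
  cases a <;> cases b <;> cases a1 <;>
    simp only [gCC, gDD, gCD, gDC, other, mCC, mDD, mCD, mDC,
      hrCC, hrCD, hrDC, hrDD] <;>
    simp only [h4, h4', h3, h3', h2, h2', h1, h1', hRC, hRD] <;>
    field_simp <;>
    ring
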